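/- Assume log P[L > x] ∼ α·log P[A > x] as x → ∞ for some α > 0. Then for every ε > 0 there exists n₀ > 0 such that for every n ≥ n₀ and every b with n^{1+ε}·P[A > b] ≤ 1, one has | (−log P[N_b > n])/(α·log n) − 1 | ≤ ε. -/

import Mathlib

open MeasureTheory ProbabilityTheory Filter Set

/-- The number of retransmissions: the first index `k ≥ 1` with `A k ω > X ω`,
viewed in `ℕ∞` (so it is `⊤` if no such index exists). -/
noncomputable def retransTime {Ω : Type*} (A : ℕ → Ω → ℝ) (X : Ω → ℝ) (ω : Ω) : ℕ∞ :=
  sInf {m : ℕ∞ | ∃ k : ℕ, m = (k : ℕ∞) ∧ 1 ≤ k ∧ X ω < A k ω}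

lemma rt_event {Ω : Type*} (A : ℕ → Ω → ℝ) (X : Ω → ℝ) (n : ℕ) :
    {ω | (n : ℕ∞) < retransTime A X ω} = ⋂ k ∈ Finset.Icc 1 n, {ω | A k ω ≤ X ω} := by
  ext ω
  simp only [Set.mem_setOf_eq, Set.mem_iInter, Finset.mem_Icc]
  constructor
  · rintro h k ⟨hk1, hkn⟩
    by_contra hlt
    push_neg at hlt
    have hle : retransTime A X ω ≤ (k : ℕ∞) := sInf_le ⟨k, rfl, hk1, hlt⟩
    exact absurd (h.trans_le hle) (by exact_mod_cast not_lt.mpr hkn)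
  · intro h
    have hh : ((n + 1 : ℕ) : ℕ∞) ≤ retransTime A X ω := by
      apply le_sInf
      rintro m ⟨k, rfl, hk1, hlt⟩
      have hkn : ¬ k ≤ n := fun hkn => absurd hlt (not_lt.mpr (h k ⟨hk1, hkn⟩))
      exact_mod_cast Nat.succ_le_of_lt (not_le.mp hkn)
    exact lt_of_lt_of_le (by exact_mod_cast Nat.lt_succ_self n) hh

lemma prob_toReal_compl {Ω : Type*} [MeasurableSpace Ω] (μ : Measure Ω) [IsProbabilityMeasure μ]
    {s : Set Ω} (hs : MeasurableSet s) : (μ sᶜ).toReal = 1 - (μ s).toReal := by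
  rw [measure_compl hs (measure_ne_top μ s), measure_univ,
    ENNReal.toReal_sub_of_le prob_le_one ENNReal.one_ne_top, ENNReal.toReal_one]

lemma prob_toReal_le_one {Ω : Type*} [MeasurableSpace Ω] (μ : Measure Ω)
    [IsProbabilityMeasure μ] (s : Set Ω) : (μ s).toReal ≤ 1 := by
  have h := ENNReal.toReal_mono ENNReal.one_ne_top (prob_le_one (μ := μ) (s := s))
  simpa using h

lemma cdf_continuous' (ν : Measure ℝ) [IsProbabilityMeasure ν] (hν : ν ≪ (volume : Measure ℝ)) :
    Continuous (cdf ν) := by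
  rw [continuous_iff_continuousAt]
  intro x
  rw [(monotone_cdf ν).continuousAt_iff_leftLim_eq_rightLim, (cdf ν).rightLim_eq]
  have h0 : ν {x} = 0 := hν (Real.volume_singleton)
  rw [← measure_cdf ν, (cdf ν).measure_singleton, ENNReal.ofReal_eq_zero] at h0
  have h1 : Function.leftLim (cdf ν) x ≤ cdf ν x := (monotone_cdf ν).leftLim_le le_rfl
  linarith

lemma tail_eq (ν : Measure ℝ) [IsProbabilityMeasure ν] (x : ℝ) :
    (ν (Ioi x)).toReal = 1 - cdf ν x := by
  have h : Ioi x = (Iic x)ᶜ := by simp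
  rw [h, prob_toReal_compl ν measurableSet_Iic, cdf_eq_real, measureReal_def]

lemma tail_continuous (ν : Measure ℝ) [IsProbabilityMeasure ν] (hν : ν ≪ (volume : Measure ℝ)) :
    Continuous fun x => (ν (Ioi x)).toReal := by
  simp only [tail_eq]
  exact continuous_const.sub (cdf_continuous' ν hν)

lemma tail_tendsto_zero (ν : Measure ℝ) [IsProbabilityMeasure ν] :
    Tendsto (fun x => (ν (Ioi x)).toReal) atTop (nhds 0) := by
  simp only [tail_eq]
  have h := tendsto_const_nhds (α := ℝ) (x := (1:ℝ)) (f := atTop)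
  simpa using h.sub (tendsto_cdf_atTop ν)

lemma prod_event {Ω : Type*} [MeasurableSpace Ω] (μ : Measure Ω) [IsProbabilityMeasure μ]
    (A : ℕ → Ω → ℝ)
    (hAmeas : ∀ i, Measurable (A i))
    (hAindep : iIndepFun A μ)
    (hAident : ∀ i, μ.map (A i) = μ.map (A 0)) (n : ℕ) (y : ℝ) :
    μ (⋂ k ∈ Finset.Icc 1 n, {ω | A k ω ≤ y}) = (μ {ω | A 0 ω ≤ y}) ^ n := by
  have heq : ∀ k : ℕ, {ω | A k ω ≤ y} = A k ⁻¹' (Iic y) := fun k => rfl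
  have hmeasval : ∀ k : ℕ, μ (A k ⁻¹' Iic y) = μ (A 0 ⁻¹' Iic y) := by
    intro k
    rw [← Measure.map_apply (hAmeas k) measurableSet_Iic, hAident k,
      Measure.map_apply (hAmeas 0) measurableSet_Iic]
  calc μ (⋂ k ∈ Finset.Icc 1 n, {ω | A k ω ≤ y})
      = ∏ k ∈ Finset.Icc 1 n, μ (A k ⁻¹' Iic y) := by
        simp only [heq]
        exact hAindep.meas_biInter fun k _ => ⟨Iic y, measurableSet_Iic, rfl⟩
    _ = ∏ k ∈ Finset.Icc 1 n, μ (A 0 ⁻¹' Iic y) :=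
        Finset.prod_congr rfl fun k _ => hmeasval k
    _ = (μ {ω | A 0 ω ≤ y}) ^ n := by
        rw [Finset.prod_const, Nat.card_Icc]; rfl

lemma indep_event {Ω : Type*} [MeasurableSpace Ω] (μ : Measure Ω) [IsProbabilityMeasure μ]
    (A : ℕ → Ω → ℝ) (X : Ω → ℝ)
    (hindep : IndepFun X (fun ω i => A i ω) μ) (n : ℕ) (y : ℝ) :
    μ ({ω | y < X ω} ∩ ⋂ k ∈ Finset.Icc 1 n, {ω | A k ω ≤ y})
      = μ {ω | y < X ω} * μ (⋂ k ∈ Finset.Icc 1 n, {ω | A k ω ≤ y}) := by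
  have hT : MeasurableSet {f : ℕ → ℝ | ∀ k ∈ Finset.Icc 1 n, f k ≤ y} := by
    have h : {f : ℕ → ℝ | ∀ k ∈ Finset.Icc 1 n, f k ≤ y}
        = ⋂ k ∈ Finset.Icc 1 n, (fun f : ℕ → ℝ => f k) ⁻¹' Iic y := by
      ext f; simp
    rw [h]
    exact MeasurableSet.biInter (Set.to_countable _)
      fun k _ => (measurable_pi_apply k) measurableSet_Iic
  have h1 : {ω | y < X ω} = X ⁻¹' Ioi y := rfl
  have h2 : (⋂ k ∈ Finset.Icc 1 n, {ω | A k ω ≤ y})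
      = (fun ω i => A i ω) ⁻¹' {f : ℕ → ℝ | ∀ k ∈ Finset.Icc 1 n, f k ≤ y} := by
    ext ω; simp
  rw [h1, h2]
  exact hindep.measure_inter_preimage_eq_mul _ _ measurableSet_Ioi hT


lemma exp_neg_two_mul_le {t : ℝ} (h0 : 0 ≤ t) (h2 : t ≤ 1/2) : Real.exp (-(2*t)) ≤ 1 - t := by
  have h1 : 1 + 2*t ≤ Real.exp (2*t) := by have := Real.add_one_le_exp (2*t); linarith
  have hpos : (0:ℝ) < 1 + 2*t := by linarith
  rw [Real.exp_neg]
  refine (inv_anti₀ hpos h1).trans ?_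
  rw [inv_le_iff_one_le_mul₀ hpos]
  nlinarith

set_option maxHeartbeats 2000000 in
lemma retrans_ana (Gbar Fbar : ℝ → ℝ) (P : ℕ → ℝ → ℝ) (α : ℝ) (hα : 0 < α)
    (hGcont : Continuous Gbar) (hGanti : Antitone Gbar)
    (hGpos : ∀ x, 0 ≤ x → 0 < Gbar x) (hGle1 : ∀ x, Gbar x ≤ 1)
    (hGzero : Tendsto Gbar atTop (nhds 0))
    (hFanti : Antitone Fbar) (hFpos : ∀ x, 0 ≤ x → 0 < Fbar x)
    (hlog : Tendsto (fun x => Real.log (Fbar x) / (α * Real.log (Gbar x))) atTop (nhds 1))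
    (hPlow : ∀ n : ℕ, ∀ b : ℝ, 0 < b → 0 < 1 - Fbar b → ∀ y ∈ Icc (0:ℝ) b,
        (Fbar y - Fbar b) * (1 - Gbar y) ^ n ≤ P n b)
    (hPup : ∀ n : ℕ, ∀ b : ℝ, 0 < b → 0 < 1 - Fbar b → ∀ x ∈ Icc (0:ℝ) b,
        P n b ≤ Fbar x / (1 - Fbar b) + (1 - Gbar x) ^ n) :
    ∀ ε > (0:ℝ), ∃ n₀ : ℕ, 0 < n₀ ∧ ∀ n, n₀ ≤ n → ∀ b, 0 < b → 0 < 1 - Fbar b →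
      (n:ℝ)^((1:ℝ)+ε) * Gbar b ≤ 1 →
      |(-Real.log (P n b)) / (α * Real.log n) - 1| ≤ ε := by
  intro ε hε
  obtain ⟨δ, hδpos, hδ4, hδε, hδkey, hδ1⟩ :
      ∃ δ:ℝ, 0 < δ ∧ δ ≤ ε/4 ∧ δ < ε ∧ δ*(2+ε) ≤ ε/2 ∧ δ < 1 := by
    refine ⟨min (ε/(2*(2+ε))) (ε/4), lt_min (by positivity) (by positivity),
      min_le_right _ _, lt_of_le_of_lt (min_le_right _ _) (by linarith), ?_, ?_⟩
    · have h1 : min (ε/(2*(2+ε))) (ε/4) ≤ ε/(2*(2+ε)) := min_le_left _ _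
      have h2 : (0:ℝ) < 2+ε := by linarith
      calc min (ε/(2*(2+ε))) (ε/4) * (2+ε) ≤ ε/(2*(2+ε)) * (2+ε) :=
            mul_le_mul_of_nonneg_right h1 h2.le
        _ = ε/2 := by field_simp
    · have h : ε/(2*(2+ε)) < 1 := by
        rw [div_lt_one (by linarith)]; linarith
      exact lt_of_le_of_lt (min_le_left _ _) h
  -- choose M
  have hGev : ∀ᶠ x in atTop, Gbar x < 1 := hGzero.eventually_lt_const one_pos
  have hlogev : ∀ᶠ x in atTop,
      |Real.log (Fbar x) / (α * Real.log (Gbar x)) - 1| < δ := by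
    have := Metric.tendsto_nhds.mp hlog δ hδpos
    simpa [Real.dist_eq] using this
  obtain ⟨M₀, hM₀⟩ := eventually_atTop.mp (hGev.and hlogev)
  obtain ⟨M, hM0, hMspec⟩ : ∃ M:ℝ, 0 ≤ M ∧ ∀ x ≥ M,
      Gbar x < 1 ∧ |Real.log (Fbar x) / (α * Real.log (Gbar x)) - 1| < δ :=
    ⟨max M₀ 0, le_max_right _ _, fun x hx => hM₀ x (le_trans (le_max_left _ _) hx)⟩
  have hsand : ∀ x, M ≤ x →
      Gbar x ^ (α*(1+δ)) ≤ Fbar x ∧ Fbar x ≤ Gbar x ^ (α*(1-δ)) := by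
    intro x hx
    have hx0 : (0:ℝ) ≤ x := le_trans hM0 hx
    obtain ⟨hG1, hrat⟩ := hMspec x hx
    have hGx : 0 < Gbar x := hGpos x hx0
    have hFx : 0 < Fbar x := hFpos x hx0
    have hlogG : Real.log (Gbar x) < 0 := Real.log_neg hGx hG1
    have hD : α * Real.log (Gbar x) < 0 := mul_neg_of_pos_of_neg hα hlogG
    rw [abs_lt] at hrat
    have hub : Real.log (Fbar x) ≤ (1-δ) * (α * Real.log (Gbar x)) := by
      have h : 1 - δ < Real.log (Fbar x) / (α * Real.log (Gbar x)) := by linarith [hrat.1]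
      exact le_of_lt ((lt_div_iff_of_neg hD).mp h)
    have hlb : (1+δ) * (α * Real.log (Gbar x)) ≤ Real.log (Fbar x) := by
      have h' : Real.log (Fbar x) / (α * Real.log (Gbar x)) < 1 + δ := by linarith [hrat.2]
      exact le_of_lt ((div_lt_iff_of_neg hD).mp h')
    constructor
    · rw [Real.rpow_def_of_pos hGx]
      calc Real.exp (Real.log (Gbar x) * (α*(1+δ)))
          = Real.exp ((1+δ) * (α * Real.log (Gbar x))) := by ring_nf
        _ ≤ Real.exp (Real.log (Fbar x)) := Real.exp_le_exp.mpr hlb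
        _ = Fbar x := Real.exp_log hFx
    · rw [Real.rpow_def_of_pos hGx]
      calc Fbar x = Real.exp (Real.log (Fbar x)) := (Real.exp_log hFx).symm
        _ ≤ Real.exp ((1-δ) * (α * Real.log (Gbar x))) := Real.exp_le_exp.mpr hub
        _ = Real.exp (Real.log (Gbar x) * (α*(1-δ))) := by ring_nf
  obtain ⟨c', hc'pos, hc'M, hc'0, hc'le1⟩ :
      ∃ c':ℝ, 0 < c' ∧ c' ≤ Gbar M ∧ c' ≤ Gbar 0 ∧ c' ≤ 1 :=
    ⟨min (Gbar M) (Gbar 0), lt_min (hGpos M hM0) (hGpos 0 le_rfl),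
      min_le_left _ _, min_le_right _ _, le_trans (min_le_left _ _) (hGle1 M)⟩
  obtain ⟨K, hKdef⟩ : ∃ K:ℝ, K = α + 1 := ⟨α+1, rfl⟩
  have hKpos : 0 < K := by rw [hKdef]; linarith
  have hK1 : 1 ≤ K := by rw [hKdef]; linarith
  -- eventual conditions
  have hcast : Tendsto (fun n:ℕ => (n:ℝ)) atTop atTop := tendsto_natCast_atTop_atTop
  have hev1 : ∀ᶠ n:ℕ in atTop, 3 ≤ n := eventually_ge_atTop 3
  have hev2 : ∀ᶠ n:ℕ in atTop, 1/(n:ℝ) < c' :=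
    tendsto_one_div_atTop_nhds_zero_nat.eventually_lt_const hc'pos
  have hld : Tendsto (fun x:ℝ => K * Real.log x / x) atTop (nhds 0) := by
    have h := Real.isLittleO_log_id_atTop.tendsto_div_nhds_zero
    have h2 := h.const_mul K
    simpa [mul_div_assoc] using h2
  have hev3 : ∀ᶠ n:ℕ in atTop, K * Real.log (n:ℝ) / (n:ℝ) < c' := by
    have := (hld.comp hcast).eventually_lt_const hc'pos
    simpa using this
  have hev6 : ∀ᶠ n:ℕ in atTop, (n:ℝ)^(-(α*ε/2)) < 1/2 := by
    have h := (tendsto_rpow_neg_atTop (show (0:ℝ) < α*ε/2 by positivity)).comp hcast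
    have := h.eventually_lt_const (show (0:ℝ) < 1/2 by norm_num)
    simpa using this
  have hev10 : ∀ᶠ n:ℕ in atTop, (n:ℝ)^(-((1+ε)*(α*(1-δ)))) < 1/2 := by
    have hexp : (0:ℝ) < (1+ε)*(α*(1-δ)) := by
      apply mul_pos (by linarith) (mul_pos hα (by linarith))
    have h := (tendsto_rpow_neg_atTop hexp).comp hcast
    have := h.eventually_lt_const (show (0:ℝ) < 1/2 by norm_num)
    simpa using this
  have hev7 : ∀ᶠ n:ℕ in atTop, K * Real.log (n:ℝ) ≤ (n:ℝ)^δ := by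
    have h := (isLittleO_log_rpow_atTop hδpos).tendsto_div_nhds_zero
    have h2 : Tendsto (fun x:ℝ => K * Real.log x / x^δ) atTop (nhds 0) := by
      simpa [mul_div_assoc] using h.const_mul K
    have h3 : ∀ᶠ x:ℝ in atTop, K * Real.log x / x^δ < 1 := h2.eventually_lt_const one_pos
    have h4 : ∀ᶠ x:ℝ in atTop, (0:ℝ) < x := eventually_gt_atTop 0
    have h5 : ∀ᶠ x:ℝ in atTop, K * Real.log x ≤ x^δ := by
      filter_upwards [h3, h4] with x hx1 hx0
      exact le_of_lt ((div_lt_one (Real.rpow_pos_of_pos hx0 δ)).mp hx1)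
    exact hcast.eventually h5
  have hev8 : ∀ᶠ n:ℕ in atTop, Real.log 2 + 2 ≤ (ε-δ)*α*Real.log (n:ℝ) := by
    have h : Tendsto (fun x:ℝ => (ε-δ)*α*Real.log x) atTop atTop :=
      Tendsto.const_mul_atTop (mul_pos (by linarith) hα) Real.tendsto_log_atTop
    exact hcast.eventually ((h.eventually_ge_atTop _))
  have hev9 : ∀ᶠ n:ℕ in atTop, Real.log 3 ≤ (α*ε/2)*Real.log (n:ℝ) := by
    have h : Tendsto (fun x:ℝ => (α*ε/2)*Real.log x) atTop atTop :=
      Tendsto.const_mul_atTop (by positivity) Real.tendsto_log_atTop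
    exact hcast.eventually ((h.eventually_ge_atTop _))
  obtain ⟨n₀, hn₀⟩ := eventually_atTop.mp
    (hev1.and (hev2.and (hev3.and (hev6.and (hev7.and (hev8.and (hev9.and hev10)))))))
  refine ⟨max n₀ 1, lt_of_lt_of_le Nat.one_pos (le_max_right _ _), ?_⟩
  intro n hn b hb hFb hbound
  obtain ⟨h3n, h2', h3', h6', h7', h8', h9', h10'⟩ := hn₀ n (le_trans (le_max_left _ _) hn)
  -- basic real facts about n
  have hr3 : (3:ℝ) ≤ (n:ℝ) := by exact_mod_cast h3n
  have hr1 : (1:ℝ) < (n:ℝ) := by linarith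
  have hr0 : (0:ℝ) < (n:ℝ) := by linarith
  have hlogr_pos : 0 < Real.log (n:ℝ) := Real.log_pos hr1
  have hlog3 : (1:ℝ) < Real.log 3 := by
    rw [show (1:ℝ) = Real.log (Real.exp 1) by rw [Real.log_exp]]
    exact Real.log_lt_log (Real.exp_pos 1) (Real.exp_one_lt_d9.trans_le (by norm_num))
  have hlogr1 : 1 < Real.log (n:ℝ) :=
    lt_of_lt_of_le hlog3 (Real.log_le_log (by norm_num) hr3)
  have hb0 : (0:ℝ) ≤ b := hb.le
  -- bound on Gbar b
  have hGb : Gbar b ≤ (n:ℝ)^(-((1:ℝ)+ε)) := by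
    have hpow : (0:ℝ) < (n:ℝ)^((1:ℝ)+ε) := Real.rpow_pos_of_pos hr0 _
    rw [Real.rpow_neg hr0.le, inv_eq_one_div, le_div_iff₀ hpow]
    linarith [hbound]
  have hrinv_lt : (n:ℝ)^(-((1:ℝ)+ε)) < 1/(n:ℝ) := by
    have h := Real.rpow_lt_rpow_of_exponent_lt hr1 (show -((1:ℝ)+ε) < -1 by linarith)
    rwa [Real.rpow_neg_one, ← one_div] at h
  have hGbc : Gbar b < c' := lt_trans (lt_of_le_of_lt hGb hrinv_lt) h2'
  have hMb : M ≤ b := by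
    by_contra h
    push_neg at h
    have h1 : Gbar M ≤ Gbar b := hGanti h.le
    linarith [hc'M]
  -- choose y with Gbar y = 1/n
  have h1rpos : (0:ℝ) < 1/(n:ℝ) := by positivity
  obtain ⟨z, hzlt, hz0⟩ :=
    ((hGzero.eventually_lt_const h1rpos).and (eventually_ge_atTop (0:ℝ))).exists
  obtain ⟨y, ⟨hy0, -⟩, hGy⟩ : ∃ y ∈ Icc 0 z, Gbar y = 1/(n:ℝ) := by
    have : 1/(n:ℝ) ∈ Icc (Gbar z) (Gbar 0) :=
      ⟨hzlt.le, le_of_lt (lt_of_lt_of_le h2' hc'0)⟩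
    exact intermediate_value_Icc' hz0 hGcont.continuousOn this
  have hyM : M ≤ y := by
    by_contra h
    push_neg at h
    have h1 : Gbar M ≤ Gbar y := hGanti h.le
    rw [hGy] at h1
    linarith [hc'M]
  have hyb : y < b := by
    by_contra h
    push_neg at h
    have h1 : Gbar y ≤ Gbar b := hGanti h
    rw [hGy] at h1
    linarith [lt_of_le_of_lt hGb hrinv_lt]
  have hy0' : (0:ℝ) ≤ y := le_trans hM0 hyM
  -- choose x with Gbar x = K log n / n
  have htpos : 0 < K * Real.log (n:ℝ) / (n:ℝ) :=
    div_pos (mul_pos hKpos hlogr_pos) hr0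
  obtain ⟨z₂, hz₂lt, hz₂0⟩ :=
    ((hGzero.eventually_lt_const htpos).and (eventually_ge_atTop (0:ℝ))).exists
  obtain ⟨x, ⟨hx0, -⟩, hGx⟩ : ∃ x ∈ Icc 0 z₂, Gbar x = K * Real.log (n:ℝ) / (n:ℝ) := by
    have : K * Real.log (n:ℝ) / (n:ℝ) ∈ Icc (Gbar z₂) (Gbar 0) :=
      ⟨hz₂lt.le, le_of_lt (lt_of_lt_of_le h3' hc'0)⟩
    exact intermediate_value_Icc' hz₂0 hGcont.continuousOn this
  have hxM : M ≤ x := by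
    by_contra h
    push_neg at h
    have h1 : Gbar M ≤ Gbar x := hGanti h.le
    rw [hGx] at h1
    linarith [hc'M]
  have hrt : (n:ℝ)^(-((1:ℝ)+ε)) < K * Real.log (n:ℝ) / (n:ℝ) := by
    have h1 : (n:ℝ)^(-((1:ℝ)+ε)) = (n:ℝ)^(-ε) / (n:ℝ) := by
      rw [show -((1:ℝ)+ε) = -ε + (-1) by ring, Real.rpow_add hr0, Real.rpow_neg_one]
      ring
    rw [h1, div_lt_div_iff_of_pos_right hr0]
    have h2 : (n:ℝ)^(-ε) < 1 := Real.rpow_lt_one_of_one_lt_of_neg hr1 (by linarith)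
    have h3 : 1 < K * Real.log (n:ℝ) :=
      lt_of_lt_of_le hlogr1 (le_mul_of_one_le_left hlogr_pos.le hK1)
    linarith
  have hxb : x < b := by
    by_contra h
    push_neg at h
    have h1 : Gbar x ≤ Gbar b := hGanti h
    rw [hGx] at h1
    linarith [lt_of_le_of_lt hGb hrt]
  have hx0' : (0:ℝ) ≤ x := le_trans hM0 hxM
  -- sandwich values
  obtain ⟨hFy_lb, -⟩ := hsand y hyM
  obtain ⟨-, hFx_ub⟩ := hsand x hxM
  obtain ⟨-, hFb_ub⟩ := hsand b hMb
  have hαδ : (0:ℝ) ≤ α * (1-δ) := mul_nonneg hα.le (by linarith)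
  have hFb_le : Fbar b ≤ (n:ℝ)^(-((1+ε)*(α*(1-δ)))) := by
    calc Fbar b ≤ Gbar b ^ (α*(1-δ)) := hFb_ub
    _ ≤ ((n:ℝ)^(-((1:ℝ)+ε))) ^ (α*(1-δ)) :=
        Real.rpow_le_rpow (hGpos b hb0).le hGb hαδ
    _ = (n:ℝ)^(-((1+ε)*(α*(1-δ)))) := by
        rw [← Real.rpow_mul hr0.le]; ring_nf
  have hFb_half : Fbar b ≤ 1/2 := hFb_le.trans h10'.le
  -- LOWER BOUND on P n b
  have hlow := hPlow n b hb hFb y ⟨hy0', hyb.le⟩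
  have hFy : (n:ℝ)^(-(α*(1+δ))) ≤ Fbar y := by
    have heq : Gbar y ^ (α*(1+δ)) = (n:ℝ)^(-(α*(1+δ))) := by
      rw [hGy, one_div, ← Real.rpow_neg_one (n:ℝ), ← Real.rpow_mul hr0.le]
      ring_nf
    rw [heq] at hFy_lb
    exact hFy_lb
  have hrpa : (0:ℝ) < (n:ℝ)^(-(α*(1+δ))) := Real.rpow_pos_of_pos hr0 _
  have hdiff : (n:ℝ)^(-(α*(1+δ))) * (1/2) ≤ Fbar y - Fbar b := by
    have h1 : Fbar b ≤ (n:ℝ)^(-(α*(1+δ))) * ((n:ℝ)^(-(α*ε/2))) := by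
      refine hFb_le.trans ?_
      rw [← Real.rpow_add hr0]
      apply Real.rpow_le_rpow_of_exponent_le hr1.le
      have hkey2 : 0 ≤ α * (ε/2 - δ*(2+ε)) := mul_nonneg hα.le (by linarith)
      linarith [hkey2]
    have h2 : (n:ℝ)^(-(α*ε/2)) ≤ 1/2 := h6'.le
    have h3 : (0:ℝ) < (n:ℝ)^(-(α*ε/2)) := Real.rpow_pos_of_pos hr0 _
    have h4 : (n:ℝ)^(-(α*(1+δ))) * ((n:ℝ)^(-(α*ε/2))) ≤ (n:ℝ)^(-(α*(1+δ))) * (1/2) :=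
      mul_le_mul_of_nonneg_left h2 hrpa.le
    linarith [hFy, h1, h4]
  have hGyn : Real.exp (-2) ≤ (1 - Gbar y)^n := by
    have h2r : 1/(n:ℝ) ≤ 1/2 := by
      rw [div_le_div_iff₀ hr0 (by norm_num)]; linarith
    have hstep : Real.exp (-(2*(1/(n:ℝ)))) ≤ 1 - 1/(n:ℝ) :=
      exp_neg_two_mul_le h1rpos.le h2r
    rw [hGy]
    have hne : (n:ℝ) ≠ 0 := ne_of_gt hr0
    calc Real.exp (-2) = (Real.exp (-(2*(1/(n:ℝ)))))^n := by
          rw [← Real.exp_nat_mul]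
          congr 1
          field_simp
      _ ≤ (1 - 1/(n:ℝ))^n := pow_le_pow_left₀ (Real.exp_pos _).le hstep n
  have hPlow2 : ((n:ℝ)^(-(α*(1+δ))) * (1/2)) * Real.exp (-2) ≤ P n b := by
    refine le_trans ?_ hlow
    have hd0 : (0:ℝ) ≤ Fbar y - Fbar b := le_trans (by positivity) hdiff
    exact mul_le_mul hdiff hGyn (Real.exp_pos _).le hd0
  have hPpos : 0 < P n b := lt_of_lt_of_le (by positivity) hPlow2
  have hlogP_le : -Real.log (P n b) ≤ α*(1+ε)*Real.log (n:ℝ) := by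
    have h1 : Real.log (((n:ℝ)^(-(α*(1+δ))) * (1/2)) * Real.exp (-2)) ≤ Real.log (P n b) :=
      Real.log_le_log (by positivity) hPlow2
    have h2 : Real.log (((n:ℝ)^(-(α*(1+δ))) * (1/2)) * Real.exp (-2))
        = -(α*(1+δ))*Real.log (n:ℝ) + Real.log (1/2) + (-2) := by
      rw [Real.log_mul (by positivity) (ne_of_gt (Real.exp_pos _)),
        Real.log_mul (by positivity) (by norm_num), Real.log_rpow hr0, Real.log_exp]
    have h3 : Real.log (1/2) = -Real.log 2 := by
      rw [one_div, Real.log_inv]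
    have h4 : (ε-δ)*α*Real.log (n:ℝ)
        = α*(1+ε)*Real.log (n:ℝ) - α*(1+δ)*Real.log (n:ℝ) := by ring
    rw [h2, h3] at h1
    linarith [h8']
  -- UPPER BOUND on P n b
  have hup := hPup n b hb hFb x ⟨hx0', hxb.le⟩
  have hFxb : Fbar x / (1 - Fbar b) ≤ 2 * ((n:ℝ)^((δ-1)*(α*(1-δ)))) := by
    have hFbge : (1:ℝ)/2 ≤ 1 - Fbar b := by linarith
    have h1 : Fbar x / (1 - Fbar b) ≤ Fbar x / (1/2) :=
      div_le_div_of_nonneg_left (hFpos x hx0').le (by norm_num) hFbge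
    have h2 : Fbar x / (1/2) = 2 * Fbar x := by ring
    have h3 : Fbar x ≤ (K * Real.log (n:ℝ) / (n:ℝ)) ^ (α*(1-δ)) := by
      rw [← hGx]; exact hFx_ub
    have h4 : K * Real.log (n:ℝ) / (n:ℝ) ≤ (n:ℝ)^(δ-(1:ℝ)) := by
      rw [Real.rpow_sub hr0, Real.rpow_one]
      gcongr
    have h5 : (K * Real.log (n:ℝ) / (n:ℝ)) ^ (α*(1-δ)) ≤ ((n:ℝ)^(δ-(1:ℝ)))^(α*(1-δ)) :=
      Real.rpow_le_rpow htpos.le h4 hαδ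
    have h6 : ((n:ℝ)^(δ-(1:ℝ)))^(α*(1-δ)) = (n:ℝ)^((δ-1)*(α*(1-δ))) :=
      (Real.rpow_mul hr0.le _ _).symm
    rw [h6] at h5
    linarith
  have hGxn : (1 - Gbar x)^n ≤ (n:ℝ)^(-K) := by
    have h1 : 1 - K * Real.log (n:ℝ) / (n:ℝ) ≤ Real.exp (-(K * Real.log (n:ℝ) / (n:ℝ))) := by
      have := Real.add_one_le_exp (-(K * Real.log (n:ℝ) / (n:ℝ))); linarith
    have h0 : (0:ℝ) ≤ 1 - K * Real.log (n:ℝ) / (n:ℝ) := by linarith [h3', hc'le1]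
    have hexp : Real.exp (-(K * Real.log (n:ℝ) / (n:ℝ)))^n = (n:ℝ)^(-K) := by
      rw [← Real.exp_nat_mul, Real.rpow_def_of_pos hr0]
      congr 1
      field_simp
    rw [hGx]
    calc (1 - K * Real.log (n:ℝ) / (n:ℝ))^n
        ≤ Real.exp (-(K * Real.log (n:ℝ) / (n:ℝ)))^n := pow_le_pow_left₀ h0 h1 n
      _ = (n:ℝ)^(-K) := hexp
  have hPup2 : P n b ≤ 3 * (n:ℝ)^(-(α*(1-ε/2))) := by
    have e1 : (n:ℝ)^((δ-1)*(α*(1-δ))) ≤ (n:ℝ)^(-(α*(1-ε/2))) :=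
      Real.rpow_le_rpow_of_exponent_le hr1.le (by
        have hkey3 : 0 ≤ α * (ε/2 - 2*δ + δ*δ) :=
          mul_nonneg hα.le (by linarith [mul_self_nonneg δ, hδ4])
        linarith [hkey3])
    have e2 : (n:ℝ)^(-K) ≤ (n:ℝ)^(-(α*(1-ε/2))) :=
      Real.rpow_le_rpow_of_exponent_le hr1.le (by
        have hkey4 : 0 ≤ α * ε := mul_nonneg hα.le hε.le
        rw [hKdef]; linarith [hkey4])
    calc P n b ≤ Fbar x / (1 - Fbar b) + (1-Gbar x)^n := hup
      _ ≤ 2*(n:ℝ)^((δ-1)*(α*(1-δ))) + (n:ℝ)^(-K) := add_le_add hFxb hGxn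
      _ ≤ 3 * (n:ℝ)^(-(α*(1-ε/2))) := by linarith
  have hlogP_ge : α*(1-ε)*Real.log (n:ℝ) ≤ -Real.log (P n b) := by
    have h1 : Real.log (P n b) ≤ Real.log (3 * (n:ℝ)^(-(α*(1-ε/2)))) :=
      Real.log_le_log hPpos hPup2
    have h2 : Real.log (3 * (n:ℝ)^(-(α*(1-ε/2))))
        = Real.log 3 + (-(α*(1-ε/2)))*Real.log (n:ℝ) := by
      rw [Real.log_mul (by norm_num) (ne_of_gt (Real.rpow_pos_of_pos hr0 _)),
        Real.log_rpow hr0]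
    have h3 : (α*ε/2)*Real.log (n:ℝ)
        = α*(1-ε/2)*Real.log (n:ℝ) - α*(1-ε)*Real.log (n:ℝ) := by ring
    rw [h2] at h1
    linarith [h9']
  -- conclusion
  have hαlog : 0 < α * Real.log (n:ℝ) := mul_pos hα hlogr_pos
  rw [abs_le]
  constructor
  · have h1 : (1-ε) * (α * Real.log (n:ℝ)) ≤ -Real.log (P n b) := by
      calc (1-ε) * (α * Real.log (n:ℝ)) = α*(1-ε)*Real.log (n:ℝ) := by ring
        _ ≤ -Real.log (P n b) := hlogP_ge
    have h2 : 1 - ε ≤ (-Real.log (P n b)) / (α * Real.log (n:ℝ)) :=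
      (le_div_iff₀ hαlog).mpr h1
    linarith
  · have h1 : -Real.log (P n b) ≤ (1+ε) * (α * Real.log (n:ℝ)) := by
      calc -Real.log (P n b) ≤ α*(1+ε)*Real.log (n:ℝ) := hlogP_le
        _ = (1+ε) * (α * Real.log (n:ℝ)) := by ring
    have h2 : (-Real.log (P n b)) / (α * Real.log (n:ℝ)) ≤ 1+ε :=
      (div_le_iff₀ hαlog).mpr h1
    linarith



set_option maxHeartbeats 2000000 in
/-- Theorem 1: logarithmic power-law asymptotics in the region
`n^(1+ε) P[A > b] ≤ 1`. -/
theorem retrans_log_powerlaw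
    {Ω : Type*} [MeasurableSpace Ω] (μ : Measure Ω) [IsProbabilityMeasure μ]
    (A : ℕ → Ω → ℝ) (L : Ω → ℝ) (Lb : ℝ → Ω → ℝ)
    (hAmeas : ∀ i, Measurable (A i))
    (hAindep : iIndepFun A μ)
    (hAident : ∀ i, μ.map (A i) = μ.map (A 0))
    (hAcont : μ.map (A 0) ≪ (volume : Measure ℝ))
    (hLmeas : Measurable L)
    (hLcont : μ.map L ≪ (volume : Measure ℝ))
    (hGpos : ∀ x : ℝ, 0 ≤ x → 0 < (μ {ω | x < A 0 ω}).toReal)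
    (hFpos : ∀ x : ℝ, 0 ≤ x → 0 < (μ {ω | x < L ω}).toReal)
    (hLbmeas : ∀ b : ℝ, Measurable (Lb b))
    (hLbindep : ∀ b : ℝ, IndepFun (Lb b) (fun ω i => A i ω) μ)
    (hLbrange : ∀ b : ℝ, 0 < b → ∀ᵐ ω ∂μ, Lb b ω ∈ Set.Icc 0 b)
    (hLbcdf : ∀ b : ℝ, 0 < b → 0 < (μ {ω | L ω ≤ b}).toReal →
      ∀ x ∈ Set.Icc (0 : ℝ) b,
        (μ {ω | Lb b ω ≤ x}).toReal
          = (μ {ω | L ω ≤ x}).toReal / (μ {ω | L ω ≤ b}).toReal)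
    (α : ℝ) (hα : 0 < α)
    (hlog : Filter.Tendsto
      (fun x : ℝ => Real.log (μ {ω | x < L ω}).toReal / (α * Real.log (μ {ω | x < A 0 ω}).toReal))
      Filter.atTop (nhds 1)) :
    ∀ ε > (0 : ℝ), ∃ n₀ : ℕ, 0 < n₀ ∧ ∀ n : ℕ, n₀ ≤ n →
      ∀ b : ℝ, 0 < b → 0 < (μ {ω | L ω ≤ b}).toReal →
        (n : ℝ) ^ ((1 : ℝ) + ε) * (μ {ω | b < A 0 ω}).toReal ≤ 1 →
          |(-Real.log (μ {ω | (n : ℕ∞) < retransTime A (Lb b) ω}).toReal) / (α * Real.log n) - 1|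
            ≤ ε := by
  haveI : IsProbabilityMeasure (μ.map (A 0)) :=
    Measure.isProbabilityMeasure_map (hAmeas 0).aemeasurable
  -- abbreviations
  have hGmap : ∀ x : ℝ, μ {ω | x < A 0 ω} = (μ.map (A 0)) (Ioi x) := fun x =>
    (Measure.map_apply (hAmeas 0) measurableSet_Ioi).symm
  have hcomplL : ∀ x : ℝ, (μ {ω | L ω ≤ x}).toReal = 1 - (μ {ω | x < L ω}).toReal := by
    intro x
    have h1 : {ω | L ω ≤ x} = {ω | x < L ω}ᶜ := by ext ω; simp
    rw [h1, prob_toReal_compl μ (measurableSet_lt measurable_const hLmeas)]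
  have hcomplA : ∀ y : ℝ, (μ {ω | A 0 ω ≤ y}).toReal = 1 - (μ {ω | y < A 0 ω}).toReal := by
    intro y
    have h1 : {ω | A 0 ω ≤ y} = {ω | y < A 0 ω}ᶜ := by ext ω; simp
    rw [h1, prob_toReal_compl μ (measurableSet_lt measurable_const (hAmeas 0))]
  -- hypotheses of the analytic lemma
  have hGcont : Continuous fun x => (μ {ω | x < A 0 ω}).toReal := by
    have h := tail_continuous (μ.map (A 0)) hAcont
    exact h.congr fun x => by rw [hGmap x]
  have hGanti : Antitone fun x => (μ {ω | x < A 0 ω}).toReal := by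
    intro u v huv
    exact ENNReal.toReal_mono (measure_ne_top μ _)
      (measure_mono fun ω h => lt_of_le_of_lt huv h)
  have hGle1 : ∀ x : ℝ, (μ {ω | x < A 0 ω}).toReal ≤ 1 := fun x => prob_toReal_le_one μ _
  have hGzero : Tendsto (fun x => (μ {ω | x < A 0 ω}).toReal) atTop (nhds 0) := by
    have h := tail_tendsto_zero (μ.map (A 0))
    exact h.congr fun x => by rw [hGmap x]
  have hFanti : Antitone fun x => (μ {ω | x < L ω}).toReal := by
    intro u v huv
    exact ENNReal.toReal_mono (measure_ne_top μ _)
      (measure_mono fun ω h => lt_of_le_of_lt huv h)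
  -- probabilistic bounds
  have hEtoReal : ∀ (n : ℕ) (y : ℝ),
      (μ (⋂ k ∈ Finset.Icc 1 n, {ω | A k ω ≤ y})).toReal
        = (1 - (μ {ω | y < A 0 ω}).toReal) ^ n := by
    intro n y
    rw [prod_event μ A hAmeas hAindep hAident n y, ENNReal.toReal_pow, hcomplA y]
  have hPlow : ∀ (n : ℕ) (b : ℝ), 0 < b → 0 < 1 - (μ {ω | b < L ω}).toReal →
      ∀ y ∈ Icc (0:ℝ) b,
      ((μ {ω | y < L ω}).toReal - (μ {ω | b < L ω}).toReal)
        * (1 - (μ {ω | y < A 0 ω}).toReal) ^ n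
        ≤ (μ {ω | (n : ℕ∞) < retransTime A (Lb b) ω}).toReal := by
    intro n b hb hFb y hy
    have hFbμ : 0 < (μ {ω | L ω ≤ b}).toReal := by rw [hcomplL b]; exact hFb
    have hLby : (μ {ω | y < Lb b ω}).toReal
        = 1 - (1 - (μ {ω | y < L ω}).toReal) / (1 - (μ {ω | b < L ω}).toReal) := by
      have h1 : {ω | y < Lb b ω} = {ω | Lb b ω ≤ y}ᶜ := by ext ω; simp
      rw [h1, prob_toReal_compl μ (measurableSet_le (hLbmeas b) measurable_const),
        hLbcdf b hb hFbμ y hy, hcomplL y, hcomplL b]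
    have hstep1 : (μ {ω | y < L ω}).toReal - (μ {ω | b < L ω}).toReal
        ≤ (μ {ω | y < Lb b ω}).toReal := by
      have hd0 : 0 ≤ (μ {ω | y < L ω}).toReal - (μ {ω | b < L ω}).toReal := by
        have := hFanti hy.2
        simpa using sub_nonneg.mpr this
      have heq : 1 - (1 - (μ {ω | y < L ω}).toReal) / (1 - (μ {ω | b < L ω}).toReal)
          = ((μ {ω | y < L ω}).toReal - (μ {ω | b < L ω}).toReal)
              / (1 - (μ {ω | b < L ω}).toReal) := by
        field_simp
        ring
      rw [hLby, heq, le_div_iff₀ hFb]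
      have hble : 1 - (μ {ω | b < L ω}).toReal ≤ 1 := by
        have := ENNReal.toReal_nonneg (a := μ {ω | b < L ω})
        linarith
      exact mul_le_of_le_one_right hd0 hble
    have hG1 : 0 ≤ 1 - (μ {ω | y < A 0 ω}).toReal := by linarith [hGle1 y]
    calc ((μ {ω | y < L ω}).toReal - (μ {ω | b < L ω}).toReal)
          * (1 - (μ {ω | y < A 0 ω}).toReal) ^ n
        ≤ (μ {ω | y < Lb b ω}).toReal * (1 - (μ {ω | y < A 0 ω}).toReal) ^ n :=
          mul_le_mul_of_nonneg_right hstep1 (pow_nonneg hG1 n)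
      _ = (μ ({ω | y < Lb b ω} ∩ ⋂ k ∈ Finset.Icc 1 n, {ω | A k ω ≤ y})).toReal := by
          rw [indep_event μ A (Lb b) (hLbindep b) n y, ENNReal.toReal_mul, hEtoReal n y]
      _ ≤ (μ {ω | (n : ℕ∞) < retransTime A (Lb b) ω}).toReal := by
          apply ENNReal.toReal_mono (measure_ne_top μ _)
          apply measure_mono
          rw [rt_event]
          rintro ω ⟨h1, h2⟩
          simp only [Set.mem_iInter, Set.mem_setOf_eq] at h1 h2 ⊢
          intro k hk
          exact le_of_lt (lt_of_le_of_lt (h2 k hk) h1)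
  have hPup : ∀ (n : ℕ) (b : ℝ), 0 < b → 0 < 1 - (μ {ω | b < L ω}).toReal →
      ∀ x ∈ Icc (0:ℝ) b,
      (μ {ω | (n : ℕ∞) < retransTime A (Lb b) ω}).toReal
        ≤ (μ {ω | x < L ω}).toReal / (1 - (μ {ω | b < L ω}).toReal)
          + (1 - (μ {ω | x < A 0 ω}).toReal) ^ n := by
    intro n b hb hFb x hx
    have hFbμ : 0 < (μ {ω | L ω ≤ b}).toReal := by rw [hcomplL b]; exact hFb
    have hsub : {ω | (n : ℕ∞) < retransTime A (Lb b) ω}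
        ⊆ {ω | x < Lb b ω} ∪ ⋂ k ∈ Finset.Icc 1 n, {ω | A k ω ≤ x} := by
      rw [rt_event]
      intro ω hω
      by_cases h : x < Lb b ω
      · exact Or.inl h
      · refine Or.inr ?_
        simp only [Set.mem_iInter, Set.mem_setOf_eq] at hω ⊢
        intro k hk
        exact le_trans (hω k hk) (not_lt.mp h)
    have hstep : (μ {ω | (n : ℕ∞) < retransTime A (Lb b) ω}).toReal
        ≤ (μ {ω | x < Lb b ω}).toReal
          + (μ (⋂ k ∈ Finset.Icc 1 n, {ω | A k ω ≤ x})).toReal := by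
      have h1 := measure_mono (μ := μ) hsub
      have h2 := measure_union_le (μ := μ) {ω : Ω | x < Lb b ω} (⋂ k ∈ Finset.Icc 1 n, {ω : Ω | A k ω ≤ x})
      have h3 := ENNReal.toReal_mono
        (ENNReal.add_ne_top.mpr ⟨measure_ne_top μ _, measure_ne_top μ _⟩) (h1.trans h2)
      rwa [ENNReal.toReal_add (measure_ne_top μ _) (measure_ne_top μ _)] at h3
    have hLbx : (μ {ω | x < Lb b ω}).toReal
        ≤ (μ {ω | x < L ω}).toReal / (1 - (μ {ω | b < L ω}).toReal) := by
      have h1 : {ω | x < Lb b ω} = {ω | Lb b ω ≤ x}ᶜ := by ext ω; simp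
      rw [h1, prob_toReal_compl μ (measurableSet_le (hLbmeas b) measurable_const),
        hLbcdf b hb hFbμ x hx, hcomplL x, hcomplL b]
      have heq : 1 - (1 - (μ {ω | x < L ω}).toReal) / (1 - (μ {ω | b < L ω}).toReal)
          = ((μ {ω | x < L ω}).toReal - (μ {ω | b < L ω}).toReal)
              / (1 - (μ {ω | b < L ω}).toReal) := by
        field_simp
        ring
      rw [heq]
      refine (div_le_div_iff_of_pos_right hFb).mpr ?_
      linarith [ENNReal.toReal_nonneg (a := μ {ω | b < L ω})]
    rw [← hEtoReal n x]
    calc (μ {ω | (n : ℕ∞) < retransTime A (Lb b) ω}).toReal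
        ≤ (μ {ω | x < Lb b ω}).toReal
          + (μ (⋂ k ∈ Finset.Icc 1 n, {ω | A k ω ≤ x})).toReal := hstep
      _ ≤ (μ {ω | x < L ω}).toReal / (1 - (μ {ω | b < L ω}).toReal)
          + (μ (⋂ k ∈ Finset.Icc 1 n, {ω | A k ω ≤ x})).toReal := by
          linarith [hLbx]
  intro ε hε
  obtain ⟨n₀, hn₀pos, H⟩ := retrans_ana
    (fun x => (μ {ω | x < A 0 ω}).toReal) (fun x => (μ {ω | x < L ω}).toReal)
    (fun n b => (μ {ω | (n : ℕ∞) < retransTime A (Lb b) ω}).toReal) α hα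
    hGcont hGanti hGpos hGle1 hGzero hFanti hFpos hlog hPlow hPup ε hε
  refine ⟨n₀, hn₀pos, ?_⟩
  intro n hn b hb hFbμ hbound
  have hFb : 0 < 1 - (μ {ω | b < L ω}).toReal := by rw [← hcomplL b]; exact hFbμ
  exact H n hn b hb hFb hbound
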